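/- Let G be a group with no elements of order 2 (i.e., g^2 = e implies g = e). Then for every finite subset A of G, the integer |AA^{-1}| - |A^{-1}A| is even. -/

import Mathlib

open scoped Pointwise

lemma aux_even {G : Type*} [Group G] [DecidableEq G]
    (hG : ∀ g : G, g ^ 2 = 1 → g = 1) :
    ∀ n (S : Finset G), S.card = n → S⁻¹ = S → (1 : G) ∉ S → Even S.card := by
  intro n
  induction n using Nat.strong_induction_on with
  | _ n ih =>
    intro S hcard hsymm h1
    have hmem : ∀ x : G, x⁻¹ ∈ S ↔ x ∈ S := fun x => by rw [← Finset.mem_inv', hsymm]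
    rcases S.eq_empty_or_nonempty with rfl | ⟨a, ha⟩
    · simp
    · have hainv : a⁻¹ ∈ S := (hmem a).2 ha
      have hne : a ≠ a⁻¹ := by
        intro h
        apply h1
        have : a ^ 2 = 1 := by
          rw [pow_two]; nth_rewrite 2 [h]; simp
        rw [← hG a this]; exact ha
      set T := (S.erase a).erase a⁻¹ with hT
      have hTsymm : T⁻¹ = T := by
        ext x
        simp only [hT, Finset.mem_inv', Finset.mem_erase, ne_eq, inv_inj,
          inv_eq_iff_eq_inv, inv_inv, hmem x]
        tauto
      have hT1 : (1 : G) ∉ T := by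
        simp only [hT, Finset.mem_erase]
        intro h; exact h1 h.2.2
      have hn2 : 2 ≤ n := by
        rw [← hcard]
        have hsub : ({a, a⁻¹} : Finset G) ⊆ S := by
          intro x hx
          simp only [Finset.mem_insert, Finset.mem_singleton] at hx
          rcases hx with rfl | rfl <;> assumption
        calc 2 = ({a, a⁻¹} : Finset G).card := by
                rw [Finset.card_insert_of_notMem (by simpa using hne), Finset.card_singleton]
          _ ≤ S.card := Finset.card_le_card hsub
      have hcardT : T.card + 2 = n := by
        rw [hT, Finset.card_erase_of_mem (Finset.mem_erase.2 ⟨hne.symm, hainv⟩),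
          Finset.card_erase_of_mem ha, hcard]
        omega
      have hlt : T.card < n := by omega
      obtain ⟨k, hk⟩ := ih T.card hlt T rfl hTsymm hT1
      exact ⟨k + 1, by omega⟩

lemma aux_odd {G : Type*} [Group G] [DecidableEq G]
    (hG : ∀ g : G, g ^ 2 = 1 → g = 1) (S : Finset G) (hsymm : S⁻¹ = S)
    (h1 : (1 : G) ∈ S) : Odd S.card := by
  have hmem : ∀ x : G, x⁻¹ ∈ S ↔ x ∈ S := fun x => by rw [← Finset.mem_inv', hsymm]
  have hsymm' : (S.erase 1)⁻¹ = S.erase 1 := by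
    ext x
    simp [Finset.mem_inv', Finset.mem_erase, inv_eq_one, hmem x]
  have := aux_even hG (S.erase 1).card (S.erase 1) rfl hsymm' (by simp)
  have hc : S.card = (S.erase 1).card + 1 := by
    rw [Finset.card_erase_of_mem h1]
    have : 1 ≤ S.card := Finset.card_pos.2 ⟨1, h1⟩
    omega
  rw [hc]
  exact this.add_one

/-- If `G` is a group with no elements of order 2, then for every finite subset `A` of `G`,
`|A * A⁻¹| - |A⁻¹ * A|` is even. -/
theorem stmt_0 {G : Type*} [Group G] [DecidableEq G]
    (hG : ∀ g : G, g ^ 2 = 1 → g = 1) (A : Finset G) :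
    Even (((A * A⁻¹).card : ℤ) - ((A⁻¹ * A).card : ℤ)) := by
  rcases A.eq_empty_or_nonempty with rfl | ⟨a, ha⟩
  · simp
  · have h1 : (A * A⁻¹)⁻¹ = A * A⁻¹ := by rw [mul_inv_rev, inv_inv]
    have h2 : (A⁻¹ * A)⁻¹ = A⁻¹ * A := by rw [mul_inv_rev, inv_inv]
    have m1 : (1 : G) ∈ A * A⁻¹ := by
      rw [Finset.mem_mul]
      exact ⟨a, ha, a⁻¹, by simpa using ha, mul_inv_cancel a⟩
    have m2 : (1 : G) ∈ A⁻¹ * A := by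
      rw [Finset.mem_mul]
      exact ⟨a⁻¹, by simpa using ha, a, ha, inv_mul_cancel a⟩
    have o1 := aux_odd hG _ h1 m1
    have o2 := aux_odd hG _ h2 m2
    rw [Int.even_sub]
    constructor <;> intro h
    · exfalso; exact (Int.not_odd_iff_even.2 h) (by exact_mod_cast o1)
    · exfalso; exact (Int.not_odd_iff_even.2 h) (by exact_mod_cast o2)
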